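/- Let m be a positive integer and p, q integers with 0 ≤ p, q ≤ m and p + q ≠ m. Then the sum over k from 0 to m of C(m,k)·(-1)^(m-k) · (Σ_{i=0}^{p} C(m-k,i)·C(k,p-i)·(-1)^i) · (Σ_{j=0}^{q} C(m-k,j)·C(k,q-j)·(-1)^j) equals 0. -/
import Mathlib
open Finset Polynomial

set_option maxRecDepth 8000 in
lemma aux1 {R : Type*} [CommRing R] (n i : ℕ) :
    ((1 - X : R[X]) ^ n).coeff i = (-1) ^ i * n.choose i := by
  have h : (1 - X : R[X]) ^ n
      = ∑ j ∈ range (n+1), C ((-1)^j * (n.choose j : R)) * X ^ j := by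
    rw [sub_eq_add_neg, add_comm, add_pow]
    refine Finset.sum_congr rfl fun j hj => ?_
    rw [neg_pow]
    simp only [map_mul, map_pow, map_neg, map_one, map_natCast]
    ring
  rw [h, finset_sum_coeff]
  simp only [coeff_C_mul, coeff_X_pow, mul_ite, mul_one, mul_zero]
  rw [Finset.sum_ite_eq (range (n+1)) i]
  by_cases hi : i ≤ n
  · simp [Finset.mem_range, Nat.lt_succ_iff, hi]
  · simp [Finset.mem_range, Nat.lt_succ_iff, hi, Nat.choose_eq_zero_of_lt (show n < i by omega)]

lemma aux2 {R : Type*} [CommRing R] (n k pp : ℕ) :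
    ((1 - X : R[X]) ^ n * (1 + X) ^ k).coeff pp
      = ∑ i ∈ range (pp+1), (-1)^i * (n.choose i : R) * (k.choose (pp - i)) := by
  rw [coeff_mul, Finset.Nat.sum_antidiagonal_eq_sum_range_succ_mk]
  refine Finset.sum_congr rfl fun i hi => ?_
  rw [aux1, coeff_one_add_X_pow]
section
variable (m : ℕ)

noncomputable def FF (m k : ℕ) : Polynomial (Polynomial ℤ) :=
  C ((1 - X)^(m-k) * (1+X)^k) * ((1 - X)^(m-k) * (1+X)^k)

lemma key (m : ℕ) :
    ∑ k ∈ range (m+1), C (C ((-1:ℤ)^(m-k) * (m.choose k))) * FF m k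
      = C (C ((2:ℤ)^m)) * (C X + X)^m := by
  have hab : ((1 + C X) * (1 + X) - (1 - C X) * (1 - X) : Polynomial (Polynomial ℤ))
      = 2 * (C X + X) := by ring
  have h := sub_pow ((1 + C X) * (1 + X) : Polynomial (Polynomial ℤ)) ((1 - C X) * (1 - X)) m
  rw [hab, mul_pow] at h
  have h2 : (C (C ((2:ℤ)^m)) : Polynomial (Polynomial ℤ)) = 2^m := by
    simp [map_pow, map_ofNat]
  rw [h2, h]
  refine Finset.sum_congr rfl fun k hk => ?_
  have hk' : k ≤ m := Nat.lt_succ_iff.mp (mem_range.mp hk)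
  have hsign : ((-1 : Polynomial (Polynomial ℤ))^(k+m)) = (-1)^(m-k) := by
    rw [show k + m = (m-k) + 2*k by omega, pow_add, pow_mul]
    norm_num
  have hcast : (C (C ((-1:ℤ)^(m-k) * (m.choose k))) : Polynomial (Polynomial ℤ))
      = (-1)^(k+m) * (m.choose k : Polynomial (Polynomial ℤ)) := by
    rw [hsign]
    simp [map_mul, map_pow, map_neg, map_one, map_natCast]
  rw [hcast, FF]
  simp only [map_mul, map_pow, map_sub, map_add, map_one, mul_pow]
  ring

end

lemma rhs0 (m p q : ℕ) (hpq : p + q ≠ m) :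
    (((C (C ((2:ℤ)^m)) * (C X + X)^m).coeff q).coeff p) = 0 := by
  rw [coeff_C_mul, coeff_C_mul]
  have h0 : ((((C X + X : Polynomial (Polynomial ℤ))^m).coeff q).coeff p) = 0 := by
    rw [add_pow, finset_sum_coeff, finset_sum_coeff]
    refine Finset.sum_eq_zero fun j hj => ?_
    have hj' : j ≤ m := Nat.lt_succ_iff.mp (mem_range.mp hj)
    have e : ((C X : Polynomial (Polynomial ℤ))^j * X^(m-j) * (m.choose j : Polynomial (Polynomial ℤ)))
        = C (X^j * C ((m.choose j : ℤ))) * X^(m-j) := by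
      simp only [map_mul, map_pow, map_natCast]
      ring
    rw [e, coeff_C_mul, coeff_X_pow, mul_ite, mul_one, mul_zero]
    by_cases hq : q = m - j
    · rw [if_pos hq, coeff_mul_C, coeff_X_pow]
      by_cases hp : p = j
      · exfalso; omega
      · simp [hp]
    · simp [hq]
  rw [h0, mul_zero]

lemma hL (m k p q : ℕ) :
    (((C (C ((-1:ℤ)^(m-k) * (m.choose k))) * FF m k).coeff q).coeff p)
      = ((-1 : ℤ)) ^ (m - k) * (m.choose k) *
      (∑ i ∈ range (p + 1), ((-1 : ℤ)) ^ i * ((m - k).choose i) * (k.choose (p - i))) *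
      (∑ j ∈ range (q + 1), ((-1 : ℤ)) ^ j * ((m - k).choose j) * (k.choose (q - j))) := by
  have hB : (∑ j ∈ range (q+1), (-1)^j * (((m-k).choose j : Polynomial ℤ)) * ((k.choose (q - j) : Polynomial ℤ)))
      = C (∑ j ∈ range (q+1), (-1)^j * (((m-k).choose j : ℤ)) * ((k.choose (q - j) : ℤ))) := by
    rw [map_sum]
    refine Finset.sum_congr rfl fun j hj => ?_
    simp [map_mul, map_pow, map_neg, map_one, map_natCast]
  rw [FF, coeff_C_mul, coeff_C_mul, coeff_C_mul, aux2, hB, coeff_mul_C, aux2]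
  ring

theorem stmt_0 (m : ℕ) (hm : 0 < m) (p q : ℕ) (hp : p ≤ m) (hq : q ≤ m)
    (hpq : p + q ≠ m) :
    ∑ k ∈ range (m + 1), ((-1 : ℤ)) ^ (m - k) * (m.choose k) *
      (∑ i ∈ range (p + 1), ((-1 : ℤ)) ^ i * ((m - k).choose i) * (k.choose (p - i))) *
      (∑ j ∈ range (q + 1), ((-1 : ℤ)) ^ j * ((m - k).choose j) * (k.choose (q - j))) = 0 := by
  calc ∑ k ∈ range (m + 1), ((-1 : ℤ)) ^ (m - k) * (m.choose k) *
      (∑ i ∈ range (p + 1), ((-1 : ℤ)) ^ i * ((m - k).choose i) * (k.choose (p - i))) *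
      (∑ j ∈ range (q + 1), ((-1 : ℤ)) ^ j * ((m - k).choose j) * (k.choose (q - j)))
      = ∑ k ∈ range (m+1), (((C (C ((-1:ℤ)^(m-k) * (m.choose k))) * FF m k).coeff q).coeff p) :=
        Finset.sum_congr rfl fun k _ => (hL m k p q).symm
    _ = (((∑ k ∈ range (m+1), C (C ((-1:ℤ)^(m-k) * (m.choose k))) * FF m k).coeff q).coeff p) := by
        rw [finset_sum_coeff, finset_sum_coeff]
    _ = (((C (C ((2:ℤ)^m)) * (C X + X)^m).coeff q).coeff p) := by rw [key m]
    _ = 0 := rhs0 m p q hpq
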